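/- Let s = 2, n ≥ 2, and let P be a valid path from (0,0) to (nr,2n) of the form E^a N E^b N Q N E^c with a + b + c < r (prefix up to second N-step, suffix after last N-step). Then for every point v in the equivalence class [r-c, 2] = {(r-c,2) + ℓ(r,2) : ℓ ∈ ℤ} that lies on P after the second N-step, P enters v with an N-step; in particular every E-edge into a point of this class occurring after P's second N-step is blocked (cannot appear on P). -/

import Mathlib

/-- The vector of a step: `true` is an east step `E=(1,0)`, `false` is a north step `N=(0,1)`. -/
def stepVec (b : Bool) : ℤ × ℤ := if b then (1, 0) else (0, 1)

/-- The point of the lattice path reached after the first `i` steps, starting at `start`. -/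
def pathPoint (start : ℤ × ℤ) (steps : List Bool) (i : ℕ) : ℤ × ℤ :=
  start + ((steps.take i).map stepVec).sum

/-- The path with step list `steps` starting at `start` ends at `fin`. -/
def IsPathFrom (start fin : ℤ × ℤ) (steps : List Bool) : Prop :=
  pathPoint start steps steps.length = fin

/-- Validity of a lattice path with respect to the equivalence `v ~ v + ℓ(r,s)`:
whenever the path enters a point `v` with an `E`-step, every later point of the path
in the class of `v` is also entered with an `E`-step. -/
def Valid (r s : ℤ) (start : ℤ × ℤ) (steps : List Bool) : Prop :=
  ∀ i j, i < j → ∀ (hi : i < steps.length) (hj : j < steps.length),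
    (∃ ℓ : ℤ, pathPoint start steps (j + 1) - pathPoint start steps (i + 1) = (ℓ * r, ℓ * s)) →
    steps.get ⟨i, hi⟩ = true → steps.get ⟨j, hj⟩ = true

lemma sum_rep (k : ℕ) : ((List.replicate k true).map stepVec).sum = ((k : ℤ), 0) := by
  induction k with
  | zero => simp; rfl
  | succ k ih => simp [List.replicate_succ, ih, stepVec, Prod.ext_iff]; ring

lemma pathPoint_split (start : ℤ × ℤ) (A B : List Bool) (k : ℕ) :
    pathPoint start (A ++ B) (A.length + k) =
      pathPoint start A A.length + ((B.take k).map stepVec).sum := by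
  simp [pathPoint, List.take_append, add_assoc]
  rw [List.take_of_length_le (by simp)]

lemma get_mid (A B : List Bool) (x : Bool) (h : A.length < (A ++ [x] ++ B).length) :
    (A ++ [x] ++ B).get ⟨A.length, h⟩ = x := by
  rw [List.get_eq_getElem, List.getElem_append_left (by simp), List.getElem_concat_length]
  all_goals rfl

lemma getD_eq_get (l : List Bool) (i : ℕ) (h : i < l.length) (d : Bool) :
    l.getD i d = l.get ⟨i, h⟩ := by
  simp [List.getD_eq_getElem?_getD, List.getElem?_eq_getElem h]

/-- if `P = E^a N E^b N Q N E^c` is a valid path from `(0,0)` to `(nr,2n)` with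
`a + b + c < r`, then every point of `P` lying after the second `N`-step in the class
`[r-c, 2] = {(r-c,2) + ℓ(r,2) : ℓ ∈ ℤ}` is entered by `P` with an `N`-step; in particular
all `E`-edges into points of this class after the second `N`-step are blocked for `P`. -/
theorem class_entered_by_north (r n : ℕ) (hr : 0 < r) (hn : 2 ≤ n)
    (a b c : ℕ) (Q : List Bool) (steps : List Bool)
    (hform : steps = List.replicate a true ++ [false] ++ List.replicate b true ++ [false] ++
      Q ++ [false] ++ List.replicate c true)
    (habc : a + b + c < r)
    (hpath : IsPathFrom (0, 0) ((n * r : ℤ), (2 * n : ℤ)) steps)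
    (hvalid : Valid r 2 (0, 0) steps) :
    ∀ m ≤ steps.length, a + b + 2 < m →
      (∃ ℓ : ℤ, pathPoint (0, 0) steps m = ((r : ℤ) - c + ℓ * r, 2 + ℓ * 2)) →
      steps.getD (m - 1) true = false := by
  set A : List Bool := List.replicate a true ++ [false] ++ List.replicate b true ++ [false] ++ Q
    with hAdef
  subst hform
  set steps : List Bool := A ++ [false] ++ List.replicate c true with hsdef
  set p : ℕ := A.length with hp
  have hlenA1 : (A ++ [false]).length = p + 1 := by simp; rfl
  have hlen : steps.length = p + 1 + c := by simp [hsdef]; omega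
  -- the point after p+1+k steps, for k ≤ c
  have hpt : ∀ k, k ≤ c → pathPoint (0, 0) steps (p + 1 + k) =
      pathPoint (0, 0) steps (p + 1) + ((k : ℤ), 0) := by
    intro k hk
    have h1 : pathPoint (0, 0) steps (p + 1 + k) =
        pathPoint (0, 0) (A ++ [false]) (p + 1) + ((k : ℤ), 0) := by
      rw [hsdef]
      have := pathPoint_split (0, 0) (A ++ [false]) (List.replicate c true) k
      rw [hlenA1] at this
      rw [this, List.take_replicate, min_eq_left hk, sum_rep]
    have h0 : pathPoint (0, 0) steps (p + 1) = pathPoint (0, 0) (A ++ [false]) (p + 1) := by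
      have := pathPoint_split (0, 0) (A ++ [false]) (List.replicate c true) 0
      rw [hlenA1] at this
      rw [hsdef]
      simpa using this
    rw [h1, h0]
  -- the point after p+1 steps is (nr - c, 2n)
  have hmid : pathPoint (0, 0) steps (p + 1) = ((n * r : ℤ) - c, (2 * n : ℤ)) := by
    have hend : pathPoint (0, 0) steps (p + 1 + c) = ((n * r : ℤ), (2 * n : ℤ)) := by
      rw [← hlen]; exact hpath
    have := hpt c le_rfl
    rw [hend] at this
    have h2 : pathPoint (0, 0) steps (p + 1) = ((n * r : ℤ), (2 * n : ℤ)) - ((c : ℤ), 0) := by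
      rw [eq_sub_iff_add_eq, ← this]
    rw [h2]; simp [Prod.ext_iff]
  have hpP : p < steps.length := by omega
  have hstep_p : steps.get ⟨p, hpP⟩ = false :=
    get_mid A (List.replicate c true) false hpP
  intro m hm hm2 ⟨ℓ, hℓ⟩
  have hm1 : 1 ≤ m := by omega
  have hmlt : m - 1 < steps.length := by omega
  rcases lt_trichotomy (m - 1) p with hlt | heq | hgt
  · -- before the last N step: use validity
    rw [getD_eq_get steps (m - 1) hmlt true]
    by_contra hTrue
    have hTrue' : steps.get ⟨m - 1, hmlt⟩ = true := by
      cases h : steps.get ⟨m - 1, hmlt⟩ <;> simp_all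
    have hdiff : ∃ ℓ' : ℤ, pathPoint (0, 0) steps (p + 1) - pathPoint (0, 0) steps (m - 1 + 1) =
        (ℓ' * r, ℓ' * 2) := by
      refine ⟨(n : ℤ) - 1 - ℓ, ?_⟩
      have : m - 1 + 1 = m := by omega
      rw [this, hℓ, hmid]
      simp only [Prod.mk_sub_mk, Prod.mk.injEq]
      constructor <;> ring
    have := hvalid (m - 1) p hlt hmlt hpP hdiff hTrue'
    rw [hstep_p] at this
    exact absurd this (by simp)
  · rw [getD_eq_get steps (m - 1) hmlt true,
      show (⟨m - 1, hmlt⟩ : Fin steps.length) = ⟨p, hpP⟩ from Fin.ext heq]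
    exact hstep_p
  · -- after the last N step: impossible to be in the class
    exfalso
    set k : ℕ := m - (p + 1) with hk
    have hk1 : 1 ≤ k := by omega
    have hkc : k ≤ c := by omega
    have hmk : m = p + 1 + k := by omega
    have := hpt k hkc
    rw [← hmk, hℓ, hmid] at this
    have h1 : (r : ℤ) - c + ℓ * r = (n * r : ℤ) - c + k := by
      have := congrArg Prod.fst this; simpa using this
    have h2 : (2 : ℤ) + ℓ * 2 = 2 * n := by
      have := congrArg Prod.snd this; simpa using this
    have hℓn : ℓ = (n : ℤ) - 1 := by omega
    rw [hℓn] at h1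
    have : (k : ℤ) = 0 := by ring_nf at h1 ⊢; linarith
    omega
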